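/- arXiv:2410.21625 — 4 statements merged into one kernel-verified Lean document; each statement's English description precedes it below -/
import Mathlib

section
/- Let 1 ≤ k ≤ n and A ∈ ℂ^{n×n}. Define Ĉ = {(λ, λa, λb) ∈ ℝ³ : a + ib ∈ Λ_k(A), λ ≥ 0} when Λ_k(A) is nonempty, and Ĉ = {(0,0,0)} when Λ_k(A) is empty. Then Ĉ = {(c,a,b) ∈ ℝ³ : c ≥ 0 and a·cos θ + b·sin θ ≤ c·λ_k(θ) for all θ ∈ ℝ}. -/
open Matrix

noncomputable section

/-- The Hermitian real part `(A + Aᴴ)/2` of a complex matrix. -/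
def ReM {n : ℕ} (A : Matrix (Fin n) (Fin n) ℂ) : Matrix (Fin n) (Fin n) ℂ :=
  (2⁻¹ : ℂ) • (A + Aᴴ)

/-- The Hermitian imaginary part `(A - Aᴴ)/(2i)` of a complex matrix. -/
def ImM {n : ℕ} (A : Matrix (Fin n) (Fin n) ℂ) : Matrix (Fin n) (Fin n) ℂ :=
  ((2 * Complex.I)⁻¹ : ℂ) • (A - Aᴴ)

/-- The `k`-th largest eigenvalue (for `1 ≤ k ≤ n`) of a Hermitian `n × n` matrix
(with junk value `0` for non-Hermitian input): the eigenvalues sorted in increasing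
order, evaluated at index `n - k`. -/
def kthEig {n : ℕ} (M : Matrix (Fin n) (Fin n) ℂ) (k : ℕ) : ℝ :=
  if hM : M.IsHermitian then
    if h : n - k < n then (hM.eigenvalues ∘ Tuple.sort hM.eigenvalues) ⟨n - k, h⟩ else 0
  else 0

/-- `λ_k(x,y) = λ_k(x·Re A + y·Im A)`. -/
def lamXY {n : ℕ} (A : Matrix (Fin n) (Fin n) ℂ) (k : ℕ) (x y : ℝ) : ℝ :=
  kthEig ((x : ℂ) • ReM A + (y : ℂ) • ImM A) k

/-- `λ_k(θ) = λ_k(cos θ · Re A + sin θ · Im A)`. -/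
def lamTheta {n : ℕ} (A : Matrix (Fin n) (Fin n) ℂ) (k : ℕ) (θ : ℝ) : ℝ :=
  lamXY A k (Real.cos θ) (Real.sin θ)

/-- The rank-`k` numerical range, via the Li–Sze halfplane description:
`Λ_k(A) = {a + ib : a cos θ + b sin θ ≤ λ_k(θ) for all θ}`. -/
def NumRange {n : ℕ} (A : Matrix (Fin n) (Fin n) ℂ) (k : ℕ) : Set ℂ :=
  {z : ℂ | ∀ θ : ℝ, z.re * Real.cos θ + z.im * Real.sin θ ≤ lamTheta A k θ}

/-- The curve `O_k(A) = {(λ_k(θ), -cos θ, -sin θ)} ⊂ ℝ³`. -/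
def OkSet {n : ℕ} (A : Matrix (Fin n) (Fin n) ℂ) (k : ℕ) : Set (Fin 3 → ℝ) :=
  {v | ∃ θ : ℝ, v = ![lamTheta A k θ, -Real.cos θ, -Real.sin θ]}

/-- Conical hull: all finite nonnegative combinations of elements of `S`
(including the empty combination `0`). -/
def coneHull {V : Type*} [AddCommMonoid V] [Module ℝ V] (S : Set V) : Set V :=
  {x | ∃ (m : ℕ) (c : Fin m → ℝ) (p : Fin m → V),
    (∀ i, 0 ≤ c i) ∧ (∀ i, p i ∈ S) ∧ x = ∑ i, c i • p i}

/-- Dual cone with respect to the standard inner product on `ι → ℝ`. -/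
def dualCone {ι : Type*} [Fintype ι] (C : Set (ι → ℝ)) : Set (ι → ℝ) :=
  {w | ∀ v ∈ C, 0 ≤ ∑ i, w i * v i}

/-- The cone `Ĉ = {(c,a,b) : c ≥ 0 and a cos θ + b sin θ ≤ c λ_k(θ) for all θ}`. -/
def ChatSet {n : ℕ} (A : Matrix (Fin n) (Fin n) ℂ) (k : ℕ) : Set (Fin 3 → ℝ) :=
  {v | 0 ≤ v 0 ∧ ∀ θ : ℝ, v 1 * Real.cos θ + v 2 * Real.sin θ ≤ v 0 * lamTheta A k θ}

open scoped Classical in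
/-- The lifted cone `Ĉ` over `Λ_k(A)` (with `Ĉ = {0}` when `Λ_k(A) = ∅`)
equals `{(c,a,b) : c ≥ 0 and a cos θ + b sin θ ≤ c λ_k(θ) for all θ}`. -/
theorem stmt1 {n k : ℕ} (hk1 : 1 ≤ k) (hkn : k ≤ n)
    (A : Matrix (Fin n) (Fin n) ℂ) :
    (if (NumRange A k).Nonempty then
      {v : Fin 3 → ℝ | ∃ a b lam : ℝ,
        (a + b * Complex.I) ∈ NumRange A k ∧ 0 ≤ lam ∧ v = ![lam, lam * a, lam * b]}
     else {![0, 0, 0]}) = ChatSet A k := by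
  have key : ∀ a b : ℝ, (∀ θ : ℝ, a * Real.cos θ + b * Real.sin θ ≤ 0) → a = 0 ∧ b = 0 := by
    intro a b h
    have h0 := h 0
    have hpi := h Real.pi
    have h2 := h (Real.pi / 2)
    have h3 := h (-(Real.pi / 2))
    simp [Real.cos_pi, Real.sin_pi] at h0 hpi h2 h3
    constructor <;> linarith
  ext v
  by_cases hne : (NumRange A k).Nonempty
  · simp only [if_pos hne, Set.mem_setOf_eq, ChatSet]
    constructor
    · rintro ⟨a, b, lam, hz, hlam, rfl⟩
      refine ⟨by simp [hlam], fun θ => ?_⟩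
      have hzθ := hz θ
      simp only [Complex.add_re, Complex.add_im, Complex.ofReal_re, Complex.ofReal_im,
        Complex.mul_re, Complex.mul_im, Complex.I_re, Complex.I_im] at hzθ
      simp only [Matrix.cons_val_zero, Matrix.cons_val_one, Matrix.head_cons,
        Matrix.cons_val_two, Matrix.tail_cons]
      nlinarith [hzθ]
    · rintro ⟨hc, h⟩
      rcases eq_or_lt_of_le hc with hc0 | hc0
      · obtain ⟨z, hz⟩ := hne
        have h' : ∀ θ : ℝ, v 1 * Real.cos θ + v 2 * Real.sin θ ≤ 0 := by
          intro θ; have := h θ; rw [← hc0] at this; simpa using this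
        obtain ⟨h1, h2⟩ := key _ _ h'
        refine ⟨z.re, z.im, 0, by simpa [Complex.re_add_im] using hz, le_refl 0, ?_⟩
        funext i
        fin_cases i <;> simp [← hc0, h1, h2]
      · refine ⟨v 1 / v 0, v 2 / v 0, v 0, ?_, le_of_lt hc0, ?_⟩
        · intro θ
          simp only [Complex.add_re, Complex.add_im, Complex.ofReal_re, Complex.ofReal_im,
            Complex.mul_re, Complex.mul_im, Complex.I_re, Complex.I_im]
          simp only [mul_zero, mul_one, zero_mul, sub_zero, add_zero, zero_add]
          rw [div_mul_eq_mul_div, div_mul_eq_mul_div, ← add_div, div_le_iff₀ hc0]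
          nlinarith [h θ]
        · funext i
          fin_cases i <;> field_simp <;> rfl
  · simp only [if_neg hne]
    constructor
    · rintro rfl
      refine ⟨by simp, fun θ => by simp⟩
    · rintro ⟨hc, h⟩
      rcases eq_or_lt_of_le hc with hc0 | hc0
      · have h' : ∀ θ : ℝ, v 1 * Real.cos θ + v 2 * Real.sin θ ≤ 0 := by
          intro θ; have := h θ; rw [← hc0] at this; simpa using this
        obtain ⟨h1, h2⟩ := key _ _ h'
        have : v = ![0, 0, 0] := by
          funext i; fin_cases i <;> simp [← hc0, h1, h2]
        simp [this]
      · exfalso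
        apply hne
        refine ⟨((v 1 / v 0 : ℝ) : ℂ) + ((v 2 / v 0 : ℝ) : ℂ) * Complex.I, fun θ => ?_⟩
        simp only [Complex.add_re, Complex.add_im, Complex.ofReal_re, Complex.ofReal_im,
          Complex.mul_re, Complex.mul_im, Complex.I_re, Complex.I_im,
          mul_zero, mul_one, zero_mul, sub_zero, add_zero, zero_add]
        rw [div_mul_eq_mul_div, div_mul_eq_mul_div, ← add_div, div_le_iff₀ hc0]
        nlinarith [h θ]

end
end

section
/- Let 1 ≤ k ≤ n and A ∈ ℂ^{n×n}. Suppose O_k(A) is not contained in any plane through the origin, i.e., there is no (c,a,b) ∈ ℝ³ \ {0} with c·λ_k(θ) − a·cos θ − b·sin θ = 0 for all θ ∈ ℝ. Let Ĉ = {(c,a,b) ∈ ℝ³ : c ≥ 0 and a·cos θ + b·sin θ ≤ c·λ_k(θ) for all θ ∈ ℝ}. Then: (1) if k ≤ (n+1)/2, the dual cone of Ĉ equals closure(cone(O_k(A))); (2) if k ≥ (n+1)/2, then the dual cone of Ĉ is all of ℝ³, Ĉ = {(0,0,0)}, and Λ_k(A) = ∅. -/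
open Matrix

noncomputable section

/-! ### Auxiliary lemmas: characteristic polynomials of Hermitian matrices -/

open Polynomial in
lemma aux_charmatrix_conj {m : Type*} [Fintype m] [DecidableEq m]
    (U M V : Matrix m m ℂ) (hUV : U * V = 1) :
    charmatrix (U * M * V) = U.map C * charmatrix M * V.map C := by
  have hmap : ∀ (P Q : Matrix m m ℂ), (P * Q).map (C : ℂ →+* ℂ[X]) = P.map C * Q.map C :=
    fun P Q => Matrix.map_mul
  simp only [charmatrix, Matrix.mul_sub, Matrix.sub_mul, RingHom.mapMatrix_apply, hmap]
  congr 1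
  rw [Matrix.mul_assoc, Matrix.scalar_commute X (fun r => (Commute.all _ _)) (V.map C),
    ← Matrix.mul_assoc, ← hmap, hUV]
  simp

open Polynomial in
lemma aux_charmatrix_diag {m : Type*} [Fintype m] [DecidableEq m] (d : m → ℂ) :
    charmatrix (diagonal d) = diagonal (fun i => (X : ℂ[X]) - C (d i)) := by
  ext i j
  by_cases h : i = j
  · subst h; simp
  · simp [h, charmatrix_apply_ne _ _ _ h, diagonal_apply_ne _ h]

open Polynomial in
lemma aux_charpoly_conj {m : Type*} [Fintype m] [DecidableEq m]
    (U M V : Matrix m m ℂ) (hUV : U * V = 1) :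
    (U * M * V).charpoly = M.charpoly := by
  have hmap : ∀ (P Q : Matrix m m ℂ), (P * Q).map (C : ℂ →+* ℂ[X]) = P.map C * Q.map C :=
    fun P Q => Matrix.map_mul
  have h1 : (U.map (C : ℂ →+* ℂ[X])).det * (V.map C).det = 1 := by
    rw [← det_mul, ← hmap, hUV]; simp
  rw [Matrix.charpoly, aux_charmatrix_conj U M V hUV, det_mul, det_mul, Matrix.charpoly]
  calc (U.map ⇑C).det * M.charmatrix.det * (V.map ⇑C).det
      = M.charmatrix.det * ((U.map (C : ℂ →+* ℂ[X])).det * (V.map C).det) := by ring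
    _ = M.charmatrix.det := by rw [h1, mul_one]

open Polynomial in
lemma aux_charpoly_hermitian {n : ℕ} {M : Matrix (Fin n) (Fin n) ℂ} (hM : M.IsHermitian) :
    M.charpoly = ∏ i, ((X : ℂ[X]) - C ((hM.eigenvalues i : ℂ))) := by
  conv_lhs => rw [hM.spectral_theorem]
  rw [Unitary.conjStarAlgAut_apply, aux_charpoly_conj _ _ _ (Matrix.mem_unitaryGroup_iff.mp hM.eigenvectorUnitary.2),
    Matrix.charpoly, aux_charmatrix_diag, det_diagonal]
  rfl

open Polynomial in
lemma aux_charpoly_neg_hermitian {n : ℕ} {M : Matrix (Fin n) (Fin n) ℂ} (hM : M.IsHermitian) :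
    (-M).charpoly = ∏ i, ((X : ℂ[X]) - C ((-hM.eigenvalues i : ℂ))) := by
  have h : -M = (hM.eigenvectorUnitary : Matrix (Fin n) (Fin n) ℂ) *
      diagonal (fun i => -((hM.eigenvalues i : ℂ))) *
      (star (hM.eigenvectorUnitary : Matrix (Fin n) (Fin n) ℂ)) := by
    conv_lhs => rw [hM.spectral_theorem]
    have : (diagonal fun i => -((hM.eigenvalues i : ℂ)))
        = -diagonal (Complex.ofReal ∘ hM.eigenvalues) := by
      rw [← diagonal_neg]; rfl
    rw [this, Matrix.mul_neg, Matrix.neg_mul]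
    rfl
  rw [h, aux_charpoly_conj _ _ _ (Matrix.mem_unitaryGroup_iff.mp hM.eigenvectorUnitary.2),
    Matrix.charpoly, aux_charmatrix_diag, det_diagonal]

open Polynomial in
lemma aux_roots_prod_eq {n : ℕ} (f : Fin n → ℂ) :
    (∏ i, ((X : ℂ[X]) - C (f i))).roots = Multiset.map f Finset.univ.val := by
  rw [Finset.prod_eq_multiset_prod]
  have : Multiset.map (fun i => (X : ℂ[X]) - C (f i)) Finset.univ.val
      = Multiset.map (fun a => (X : ℂ[X]) - C a) (Multiset.map f Finset.univ.val) := by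
    rw [Multiset.map_map]; rfl
  rw [this, roots_multiset_prod_X_sub_C]

lemma aux_eig_neg_multiset {n : ℕ} {M : Matrix (Fin n) (Fin n) ℂ} (hM : M.IsHermitian)
    (hM' : (-M).IsHermitian) :
    Multiset.map hM'.eigenvalues Finset.univ.val
      = Multiset.map (fun i => - hM.eigenvalues i) Finset.univ.val := by
  have h1 := aux_charpoly_hermitian hM'
  have h2 := aux_charpoly_neg_hermitian hM
  rw [h2] at h1
  have h3 : Multiset.map (fun i => (hM'.eigenvalues i : ℂ)) Finset.univ.val
      = Multiset.map (fun i => ((- hM.eigenvalues i : ℝ) : ℂ)) Finset.univ.val := by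
    rw [← aux_roots_prod_eq, ← aux_roots_prod_eq, ← h1]
    push_cast
    rfl
  have h4 := congrArg (Multiset.map Complex.re) h3
  rw [Multiset.map_map, Multiset.map_map] at h4
  simpa using h4

lemma aux_mono_eq_of_multiset {m : ℕ} {f g : Fin m → ℝ} (hf : Monotone f) (hg : Monotone g)
    (h : Multiset.map f Finset.univ.val = Multiset.map g Finset.univ.val) : f = g := by
  rw [Fin.univ_val_map, Fin.univ_val_map] at h
  exact List.ofFn_injective
    ((Multiset.coe_eq_coe.mp h).eq_of_sortedLE hf.sortedLE_ofFn hg.sortedLE_ofFn)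

lemma aux_map_comp_perm {m : ℕ} (h : Fin m → ℝ) (σ : Equiv.Perm (Fin m)) :
    Multiset.map (h ∘ σ) Finset.univ.val = Multiset.map h Finset.univ.val := by
  rw [← Multiset.map_map]
  congr 1
  have huniv : (Finset.univ.map σ.toEmbedding).val = Finset.univ.val := by
    rw [Finset.map_univ_equiv]
  rw [show Multiset.map (⇑σ) Finset.univ.val = (Finset.univ.map σ.toEmbedding).val from rfl,
    Finset.map_univ_equiv]

/-- sorted eigenvalues of `-M` are the negated reversed sorted eigenvalues of `M`. -/
lemma aux_sorted_eig_neg {n : ℕ} {M : Matrix (Fin n) (Fin n) ℂ} (hM : M.IsHermitian)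
    (hM' : (-M).IsHermitian) :
    (hM'.eigenvalues ∘ Tuple.sort hM'.eigenvalues)
      = fun i => - (hM.eigenvalues ∘ Tuple.sort hM.eigenvalues) i.rev := by
  apply aux_mono_eq_of_multiset (Tuple.monotone_sort _)
  · intro i j hij
    simp only
    have : j.rev ≤ i.rev := by
      rw [Fin.rev_le_rev]; exact hij
    exact neg_le_neg ((Tuple.monotone_sort hM.eigenvalues) this)
  · have e1 : Multiset.map (hM'.eigenvalues ∘ Tuple.sort hM'.eigenvalues) Finset.univ.val
        = Multiset.map hM'.eigenvalues Finset.univ.val := aux_map_comp_perm _ _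
    have e2 : Multiset.map (fun i : Fin n => - (hM.eigenvalues ∘ Tuple.sort hM.eigenvalues) i.rev)
          Finset.univ.val
        = Multiset.map (fun i => - hM.eigenvalues i) Finset.univ.val := by
      have heq : (fun i : Fin n => - (hM.eigenvalues ∘ Tuple.sort hM.eigenvalues) i.rev)
          = (fun i => - hM.eigenvalues i) ∘ ⇑(Fin.revPerm.trans (Tuple.sort hM.eigenvalues)) := rfl
      rw [heq, aux_map_comp_perm]
    rw [e1, e2, aux_eig_neg_multiset hM hM']

lemma aux_kthEig_add_kthEig_neg {n k : ℕ} (hk1 : 1 ≤ k) (hkn : k ≤ n)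
    {M : Matrix (Fin n) (Fin n) ℂ} (hM : M.IsHermitian) :
    kthEig M k + kthEig (-M) k
      = (hM.eigenvalues ∘ Tuple.sort hM.eigenvalues) ⟨n - k, by omega⟩
        - (hM.eigenvalues ∘ Tuple.sort hM.eigenvalues) ⟨k - 1, by omega⟩ := by
  have hM' : (-M).IsHermitian := hM.neg
  have hlt : n - k < n := by omega
  rw [kthEig, kthEig, dif_pos hM, dif_pos hM', dif_pos hlt, dif_pos hlt,
    aux_sorted_eig_neg hM hM']
  have hrev : (⟨n - k, hlt⟩ : Fin n).rev = ⟨k - 1, by omega⟩ := by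
    ext
    simp [Fin.val_rev]
    omega
  simp only [hrev]
  ring

lemma aux_kthEig_sign_low {n k : ℕ} (hk1 : 1 ≤ k) (hkn : k ≤ n) (h2 : 2 * k ≤ n + 1)
    {M : Matrix (Fin n) (Fin n) ℂ} (hM : M.IsHermitian) :
    0 ≤ kthEig M k + kthEig (-M) k := by
  rw [aux_kthEig_add_kthEig_neg hk1 hkn hM]
  have := Tuple.monotone_sort hM.eigenvalues
    (show (⟨k - 1, by omega⟩ : Fin n) ≤ ⟨n - k, by omega⟩ by
      rw [Fin.mk_le_mk]; omega)
  linarith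

lemma aux_kthEig_sign_high {n k : ℕ} (hk1 : 1 ≤ k) (hkn : k ≤ n) (h2 : n + 1 ≤ 2 * k)
    {M : Matrix (Fin n) (Fin n) ℂ} (hM : M.IsHermitian) :
    kthEig M k + kthEig (-M) k ≤ 0 := by
  rw [aux_kthEig_add_kthEig_neg hk1 hkn hM]
  have := Tuple.monotone_sort hM.eigenvalues
    (show (⟨n - k, by omega⟩ : Fin n) ≤ ⟨k - 1, by omega⟩ by
      rw [Fin.mk_le_mk]; omega)
  linarith

/-! ### The matrices `cos θ • Re A + sin θ • Im A` -/

def Mxy {n : ℕ} (A : Matrix (Fin n) (Fin n) ℂ) (x y : ℝ) : Matrix (Fin n) (Fin n) ℂ :=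
  (x : ℂ) • ReM A + (y : ℂ) • ImM A

lemma aux_isHermitian_ReM {n : ℕ} (A : Matrix (Fin n) (Fin n) ℂ) : (ReM A).IsHermitian := by
  unfold Matrix.IsHermitian ReM
  rw [conjTranspose_smul, conjTranspose_add, conjTranspose_conjTranspose]
  simp [add_comm]

lemma aux_isHermitian_ImM {n : ℕ} (A : Matrix (Fin n) (Fin n) ℂ) : (ImM A).IsHermitian := by
  unfold Matrix.IsHermitian ImM
  rw [conjTranspose_smul, conjTranspose_sub, conjTranspose_conjTranspose]
  have h1 : star ((2 * Complex.I)⁻¹ : ℂ) = -((2 * Complex.I)⁻¹ : ℂ) := by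
    rw [star_inv₀, ← inv_neg]
    congr 1
    simp [Complex.ext_iff]
  rw [h1, (neg_sub A Aᴴ).symm, smul_neg, neg_smul, neg_neg]

lemma aux_isHermitian_Mxy {n : ℕ} (A : Matrix (Fin n) (Fin n) ℂ) (x y : ℝ) :
    (Mxy A x y).IsHermitian := by
  have h1 : ((x : ℂ) • ReM A).IsHermitian := by
    unfold Matrix.IsHermitian
    rw [conjTranspose_smul, aux_isHermitian_ReM A]
    simp [Complex.star_def, Complex.conj_ofReal]
  have h2 : ((y : ℂ) • ImM A).IsHermitian := by
    unfold Matrix.IsHermitian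
    rw [conjTranspose_smul, aux_isHermitian_ImM A]
    simp [Complex.star_def, Complex.conj_ofReal]
  exact h1.add h2

lemma aux_Mxy_pi {n : ℕ} (A : Matrix (Fin n) (Fin n) ℂ) (θ : ℝ) :
    Mxy A (Real.cos (θ + Real.pi)) (Real.sin (θ + Real.pi))
      = - Mxy A (Real.cos θ) (Real.sin θ) := by
  unfold Mxy
  rw [Real.cos_add_pi, Real.sin_add_pi]
  push_cast
  rw [neg_smul, neg_smul, neg_add]

lemma aux_lamTheta_eq {n : ℕ} (A : Matrix (Fin n) (Fin n) ℂ) (k : ℕ) (θ : ℝ) :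
    lamTheta A k θ = kthEig (Mxy A (Real.cos θ) (Real.sin θ)) k := rfl

lemma aux_lam_sum_low {n k : ℕ} (hk1 : 1 ≤ k) (hkn : k ≤ n) (h2 : 2 * k ≤ n + 1)
    (A : Matrix (Fin n) (Fin n) ℂ) (θ : ℝ) :
    0 ≤ lamTheta A k θ + lamTheta A k (θ + Real.pi) := by
  rw [aux_lamTheta_eq, aux_lamTheta_eq, aux_Mxy_pi]
  exact aux_kthEig_sign_low hk1 hkn h2 (aux_isHermitian_Mxy A _ _)

lemma aux_lam_sum_high {n k : ℕ} (hk1 : 1 ≤ k) (hkn : k ≤ n) (h2 : n + 1 ≤ 2 * k)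
    (A : Matrix (Fin n) (Fin n) ℂ) (θ : ℝ) :
    lamTheta A k θ + lamTheta A k (θ + Real.pi) ≤ 0 := by
  rw [aux_lamTheta_eq, aux_lamTheta_eq, aux_Mxy_pi]
  exact aux_kthEig_sign_high hk1 hkn h2 (aux_isHermitian_Mxy A _ _)

/-! ### Cone hull lemmas -/

section coneHullLemmas
variable {V : Type*} [AddCommGroup V] [Module ℝ V] {S : Set V}

lemma coneHull_zero_mem : (0 : V) ∈ coneHull S :=
  ⟨0, fun i => 0, fun i => i.elim0, fun i => i.elim0, fun i => i.elim0, by simp⟩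

lemma subset_coneHull : S ⊆ coneHull S := fun x hx =>
  ⟨1, fun _ => 1, fun _ => x, fun _ => zero_le_one, fun _ => hx, by simp⟩

lemma coneHull_mono {T : Set V} (hST : S ⊆ T) : coneHull S ⊆ coneHull T := by
  rintro x ⟨m, c, p, hc, hp, rfl⟩
  exact ⟨m, c, p, hc, fun i => hST (hp i), rfl⟩

lemma coneHull_add {x y : V} (hx : x ∈ coneHull S) (hy : y ∈ coneHull S) :
    x + y ∈ coneHull S := by
  obtain ⟨m₁, c₁, p₁, hc₁, hp₁, rfl⟩ := hx
  obtain ⟨m₂, c₂, p₂, hc₂, hp₂, rfl⟩ := hy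
  refine ⟨m₁ + m₂, Fin.append c₁ c₂, Fin.append p₁ p₂, ?_, ?_, ?_⟩
  · intro i
    refine Fin.addCases (motive := fun i => 0 ≤ Fin.append c₁ c₂ i) (fun j => ?_) (fun j => ?_) i
    · simpa [Fin.append_left] using hc₁ j
    · simpa [Fin.append_right] using hc₂ j
  · intro i
    refine Fin.addCases (motive := fun i => Fin.append p₁ p₂ i ∈ S) (fun j => ?_) (fun j => ?_) i
    · simpa [Fin.append_left] using hp₁ j
    · simpa [Fin.append_right] using hp₂ j
  · rw [Fin.sum_univ_add]
    simp [Fin.append_left, Fin.append_right]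

lemma coneHull_smul {c : ℝ} (hc : 0 ≤ c) {x : V} (hx : x ∈ coneHull S) :
    c • x ∈ coneHull S := by
  obtain ⟨m, cs, p, hcs, hp, rfl⟩ := hx
  exact ⟨m, fun i => c * cs i, p, fun i => mul_nonneg hc (hcs i), hp, by
    rw [Finset.smul_sum]; simp [smul_smul]⟩

lemma coneHull_neg_mem (hS : ∀ x ∈ S, -x ∈ S) {x : V} (hx : x ∈ coneHull S) :
    -x ∈ coneHull S := by
  obtain ⟨m, cs, p, hcs, hp, rfl⟩ := hx
  exact ⟨m, cs, fun i => -(p i), hcs, fun i => hS _ (hp i), by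
    simp [smul_neg, ← Finset.sum_neg_distrib]⟩

lemma span_subset_coneHull (hS : ∀ x ∈ S, -x ∈ S) :
    (Submodule.span ℝ S : Set V) ⊆ coneHull S := by
  intro x hx
  induction hx using Submodule.span_induction with
  | mem x h => exact subset_coneHull h
  | zero => exact coneHull_zero_mem
  | add x y hx hy ihx ihy => exact coneHull_add ihx ihy
  | smul a x hx ih =>
    rcases le_or_gt 0 a with h|h
    · exact coneHull_smul h ih
    · have : a • x = (-a) • (-x) := by simp
      rw [this]
      exact coneHull_smul (by linarith) (coneHull_neg_mem hS ih)

end coneHullLemmas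

/-! ### Duality lemmas -/

open scoped InnerProductSpace

section dualLemmas
variable {H : Type*} [NormedAddCommGroup H] [InnerProductSpace ℝ H] [CompleteSpace H]

/-- the cone hull as a convex cone -/
def coneHullCC (S : Set H) : ConvexCone ℝ H where
  carrier := coneHull S
  smul_mem' := fun _ hc _ hx => coneHull_smul (le_of_lt hc) hx
  add_mem' := fun _ hx _ hy => coneHull_add hx hy

lemma innerDualCone_closure_coneHull (S : Set H) :
    (ProperCone.innerDual (closure (coneHull S)) : Set H) = ProperCone.innerDual S := by
  apply le_antisymm
  · exact SetLike.coe_subset_coe.mpr (ProperCone.innerDual_le_innerDual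
      (subset_coneHull.trans subset_closure))
  · intro w hw
    rw [SetLike.mem_coe, ProperCone.mem_innerDual] at hw ⊢
    intro x hx
    have hcone : ∀ y ∈ coneHull S, 0 ≤ ⟪y, w⟫_ℝ := by
      rintro y ⟨m, c, p, hc, hp, rfl⟩
      rw [sum_inner]
      apply Finset.sum_nonneg
      intro i _
      rw [real_inner_smul_left]
      exact mul_nonneg (hc i) (hw (hp i))
    have hclosed : IsClosed {y : H | 0 ≤ ⟪y, w⟫_ℝ} := by
      have heq : {y : H | 0 ≤ ⟪y, w⟫_ℝ} = (fun y : H => ⟪y, w⟫_ℝ) ⁻¹' Set.Ici 0 := rfl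
      rw [heq]
      exact isClosed_Ici.preimage (continuous_id.inner continuous_const)
    exact closure_minimal hcone hclosed hx

/-- bidual of a set is the closure of its cone hull -/
def coneHullPC (S : Set H) : Submodule NNReal H where
  carrier := coneHull S
  add_mem' := fun hx hy => coneHull_add hx hy
  zero_mem' := coneHull_zero_mem
  smul_mem' := fun c _ hx => coneHull_smul c.2 hx

def coneHullPrC (S : Set H) : ProperCone ℝ H where
  toSubmodule := (coneHullPC S).topologicalClosure
  isClosed' := (coneHullPC S).isClosed_topologicalClosure

lemma bidual_eq (S : Set H) :
    ((ProperCone.innerDual (ProperCone.innerDual S : Set H)) : Set H) = closure (coneHull S) := by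
  have hK : ((coneHullPrC S : ProperCone ℝ H) : Set H) = closure (coneHull S) := rfl
  have h := ProperCone.innerDual_innerDual (coneHullPrC S)
  rw [hK] at h
  conv_lhs => rw [← innerDualCone_closure_coneHull S]
  rw [h]
  exact hK

end dualLemmas

/-! ### Fin 3 specific duality -/

abbrev H3 : Type := EuclideanSpace ℝ (Fin 3)

def idc (C : Set (Fin 3 → ℝ)) : Set (Fin 3 → ℝ) :=
  WithLp.toLp 2 ⁻¹' (ProperCone.innerDual (WithLp.toLp 2 '' C : Set H3) : Set H3)

lemma inner_H3 (v w : H3) : ⟪v, w⟫_ℝ = ∑ i, v i * w i := by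
  simp [PiLp.inner_apply, RCLike.inner_apply]
  exact Finset.sum_congr rfl fun i _ => mul_comm _ _

lemma dualCone_eq_innerDual (C : Set (Fin 3 → ℝ)) :
    dualCone C = idc C := by
  ext w
  constructor
  · intro hw
    simp only [idc, Set.mem_preimage, SetLike.mem_coe, ProperCone.mem_innerDual,
      Set.forall_mem_image]
    intro v hv
    rw [inner_H3]
    simp only [WithLp.ofLp_toLp]
    calc (0:ℝ) ≤ ∑ i, w i * v i := hw v hv
      _ = ∑ i, v i * w i := Finset.sum_congr rfl fun i _ => mul_comm _ _
  · intro hw v hv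
    simp only [idc, Set.mem_preimage, SetLike.mem_coe, ProperCone.mem_innerDual,
      Set.forall_mem_image] at hw
    have := @hw v hv
    rw [inner_H3] at this
    simp only [WithLp.ofLp_toLp] at this
    calc (0:ℝ) ≤ ∑ i, v i * w i := this
      _ = ∑ i, w i * v i := Finset.sum_congr rfl fun i _ => mul_comm _ _

lemma coneHull_toLp (X : Set (Fin 3 → ℝ)) :
    WithLp.toLp 2 ⁻¹' coneHull (WithLp.toLp 2 '' X : Set H3) = coneHull X := by
  ext x
  constructor
  · rintro ⟨m, c, p, hc, hp, hx⟩
    choose q hq hqp using hp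
    refine ⟨m, c, q, hc, hq, ?_⟩
    have := congrArg WithLp.ofLp hx
    simpa [WithLp.ofLp_sum, ← hqp] using this
  · rintro ⟨m, c, p, hc, hp, rfl⟩
    exact ⟨m, c, fun i => WithLp.toLp 2 (p i), hc, fun i => ⟨p i, hp i, rfl⟩,
      by simp [WithLp.toLp_sum]⟩

lemma idc_idc (X : Set (Fin 3 → ℝ)) : idc (idc X) = closure (coneHull X) := by
  have himg : WithLp.toLp 2 '' idc X
      = (ProperCone.innerDual (WithLp.toLp 2 '' X : Set H3) : Set H3) :=
    Set.image_preimage_eq _ (WithLp.toLp_surjective 2)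
  show WithLp.toLp 2 ⁻¹' (ProperCone.innerDual (WithLp.toLp 2 '' idc X : Set H3) : Set H3) = _
  rw [himg, bidual_eq]
  rw [show (WithLp.toLp 2 : (Fin 3 → ℝ) → H3) ⁻¹' closure (coneHull (WithLp.toLp 2 '' X))
      = closure (WithLp.toLp 2 ⁻¹' coneHull (WithLp.toLp 2 '' X : Set H3))
      from (PiLp.homeomorph 2 (fun _ : Fin 3 => ℝ)).symm.preimage_closure _, coneHull_toLp]

/-- the distinguished direction `(1,0,0)`. -/
def e0 : Fin 3 → ℝ := ![1, 0, 0]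

lemma ChatSet_eq_idc {n k : ℕ} (A : Matrix (Fin n) (Fin n) ℂ) :
    ChatSet A k = idc (OkSet A k ∪ {e0}) := by
  ext w
  constructor
  · rintro ⟨h0, hθ⟩
    simp only [idc, Set.mem_preimage, SetLike.mem_coe, ProperCone.mem_innerDual,
      Set.forall_mem_image]
    intro v hv
    rw [inner_H3, Fin.sum_univ_three]
    simp only [WithLp.ofLp_toLp]
    rcases hv with ⟨θ, rfl⟩ | hv
    · have := hθ θ
      simp only [Matrix.cons_val_zero, Matrix.cons_val_one, Matrix.head_cons,
        Matrix.cons_val_two, Matrix.tail_cons]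
      nlinarith [hθ θ]
    · rw [Set.mem_singleton_iff] at hv
      subst hv
      simp [e0, h0]
  · intro hw
    simp only [idc, Set.mem_preimage, SetLike.mem_coe, ProperCone.mem_innerDual,
      Set.forall_mem_image] at hw
    constructor
    · have := @hw e0 (Set.mem_union_right _ rfl)
      rw [inner_H3, Fin.sum_univ_three] at this
      simpa [e0] using this
    · intro θ
      have := @hw ![lamTheta A k θ, -Real.cos θ, -Real.sin θ]
        (Set.mem_union_left _ ⟨θ, rfl⟩)
      rw [inner_H3, Fin.sum_univ_three] at this
      simp only [WithLp.ofLp_toLp] at this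
      simp only [Matrix.cons_val_zero, Matrix.cons_val_one, Matrix.head_cons,
        Matrix.cons_val_two, Matrix.tail_cons] at this
      nlinarith [this]

lemma aux_e0_mem_closure {n k : ℕ} (hk1 : 1 ≤ k) (hkn : k ≤ n)
    (A : Matrix (Fin n) (Fin n) ℂ) (h2 : 2 * k ≤ n + 1)
    (hplane : ¬ ∃ w : Fin 3 → ℝ, w ≠ 0 ∧
      ∀ θ : ℝ, w 0 * lamTheta A k θ - w 1 * Real.cos θ - w 2 * Real.sin θ = 0) :
    e0 ∈ closure (coneHull (OkSet A k)) := by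
  by_cases hex : ∃ θ, 0 < lamTheta A k θ + lamTheta A k (θ + Real.pi)
  · obtain ⟨θ, hθ⟩ := hex
    set s : ℝ := lamTheta A k θ + lamTheta A k (θ + Real.pi) with hs
    have hs0 : s ≠ 0 := ne_of_gt hθ
    apply subset_closure
    refine ⟨2, ![s⁻¹, s⁻¹], ![![lamTheta A k θ, -Real.cos θ, -Real.sin θ],
      ![lamTheta A k (θ + Real.pi), -Real.cos (θ + Real.pi), -Real.sin (θ + Real.pi)]],
      ?_, ?_, ?_⟩
    · intro i
      fin_cases i <;> simpa using le_of_lt (inv_pos.mpr hθ)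
    · intro i
      fin_cases i
      · exact ⟨θ, rfl⟩
      · exact ⟨θ + Real.pi, rfl⟩
    · rw [Fin.sum_univ_two]
      funext i
      fin_cases i <;> simp [e0, Real.cos_add_pi, Real.sin_add_pi]
      rw [← mul_add, ← hs, inv_mul_cancel₀ hs0]
  · push_neg at hex
    have hzero : ∀ θ, lamTheta A k θ + lamTheta A k (θ + Real.pi) = 0 := fun θ =>
      le_antisymm (hex θ) (aux_lam_sum_low hk1 hkn h2 A θ)
    have hS : ∀ x ∈ OkSet A k, -x ∈ OkSet A k := by
      rintro x ⟨θ, rfl⟩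
      refine ⟨θ + Real.pi, ?_⟩
      funext i
      fin_cases i <;> simp [Real.cos_add_pi, Real.sin_add_pi]
      linarith [hzero θ]
    apply subset_closure
    apply span_subset_coneHull hS
    have hspan : Submodule.span ℝ (OkSet A k) = ⊤ := by
      by_contra hne
      obtain ⟨f, hf0, hle⟩ := Submodule.exists_le_ker_of_lt_top _ (lt_top_iff_ne_top.mpr hne)
      have hrep : ∀ v : Fin 3 → ℝ, f v = v 0 * f (Pi.single 0 1) + v 1 * f (Pi.single 1 1)
          + v 2 * f (Pi.single 2 1) := by
        intro v
        have hv : v = v 0 • Pi.single 0 1 + v 1 • Pi.single 1 1 + v 2 • Pi.single 2 1 := by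
          funext i; fin_cases i <;> simp
        conv_lhs => rw [hv]
        simp only [map_add, map_smul, smul_eq_mul]
      refine hplane ⟨fun i => f (Pi.single i 1), fun h => hf0 ?_, fun θ => ?_⟩
      · apply LinearMap.ext
        intro v
        have h0 := congrFun h 0
        have h1 := congrFun h 1
        have h2 := congrFun h 2
        simp only [Pi.zero_apply] at h0 h1 h2
        rw [hrep v, h0, h1, h2, LinearMap.zero_apply]
        ring
      · have hv := hle (Submodule.subset_span ⟨θ, rfl⟩ :
          (![lamTheta A k θ, -Real.cos θ, -Real.sin θ] : Fin 3 → ℝ) ∈ Submodule.span ℝ (OkSet A k))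
        rw [LinearMap.mem_ker, hrep] at hv
        simp only [Matrix.cons_val_zero, Matrix.cons_val_one, Matrix.head_cons,
          Matrix.cons_val_two, Matrix.tail_cons] at hv
        show f (Pi.single 0 1) * lamTheta A k θ - f (Pi.single 1 1) * Real.cos θ
          - f (Pi.single 2 1) * Real.sin θ = 0
        linarith
    rw [hspan]
    trivial

/-- Suppose `O_k(A)` is not contained in a plane through the origin.
If `k ≤ (n+1)/2` then `Ĉ* = closure(cone(O_k(A)))`; if `k ≥ (n+1)/2` then
`Ĉ* = ℝ³`, `Ĉ = {0}`, and `Λ_k(A) = ∅`. -/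
theorem stmt4 {n k : ℕ} (hk1 : 1 ≤ k) (hkn : k ≤ n)
    (A : Matrix (Fin n) (Fin n) ℂ)
    (hplane : ¬ ∃ w : Fin 3 → ℝ, w ≠ 0 ∧
      ∀ θ : ℝ, w 0 * lamTheta A k θ - w 1 * Real.cos θ - w 2 * Real.sin θ = 0) :
    ((k : ℝ) ≤ (n + 1) / 2 →
        dualCone (ChatSet A k) = closure (coneHull (OkSet A k))) ∧
    ((n + 1 : ℝ) / 2 ≤ (k : ℝ) →
        dualCone (ChatSet A k) = Set.univ ∧
        ChatSet A k = {![0, 0, 0]} ∧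
        NumRange A k = ∅) := by
  constructor
  · -- part 1
    intro hle
    have h2 : 2 * k ≤ n + 1 := by
      have h2' : ((2 * k : ℕ) : ℝ) ≤ ((n + 1 : ℕ) : ℝ) := by push_cast; linarith
      exact_mod_cast h2'
    have he0 := aux_e0_mem_closure hk1 hkn A h2 hplane
    have key : closure (coneHull (OkSet A k ∪ {e0})) = closure (coneHull (OkSet A k)) := by
      apply Set.Subset.antisymm
      · apply closure_minimal ?_ isClosed_closure
        rintro x ⟨m, c, p, hc, hp, rfl⟩
        refine Finset.sum_induction _ (· ∈ closure (coneHull (OkSet A k))) ?_ ?_ ?_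
        · intro a b ha hb
          exact map_mem_closure₂ continuous_add ha hb fun x hx y hy => coneHull_add hx hy
        · exact subset_closure coneHull_zero_mem
        · intro i _
          rcases hp i with hO | he
          · exact subset_closure (coneHull_smul (hc i) (subset_coneHull hO))
          · rw [Set.mem_singleton_iff] at he
            rw [he]
            exact map_mem_closure (continuous_const_smul (c i)) he0
              fun y hy => coneHull_smul (hc i) hy
      · exact closure_mono (coneHull_mono Set.subset_union_left)
    calc dualCone (ChatSet A k) = idc (idc (OkSet A k ∪ {e0})) := by
          rw [ChatSet_eq_idc, dualCone_eq_innerDual]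
      _ = closure (coneHull (OkSet A k ∪ {e0})) := idc_idc _
      _ = closure (coneHull (OkSet A k)) := key
  · -- part 2
    intro hge
    have h2 : n + 1 ≤ 2 * k := by
      have h2' : ((n + 1 : ℕ) : ℝ) ≤ ((2 * k : ℕ) : ℝ) := by push_cast; linarith
      exact_mod_cast h2'
    have hChat : ChatSet A k = {![0, 0, 0]} := by
      ext v
      constructor
      · rintro ⟨hv0, hv⟩
        have hf : ∀ θ, 0 ≤ v 0 * lamTheta A k θ - v 1 * Real.cos θ - v 2 * Real.sin θ := by
          intro θ
          have := hv θ
          linarith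
        have hzero : ∀ θ, v 0 * lamTheta A k θ - v 1 * Real.cos θ - v 2 * Real.sin θ = 0 := by
          intro θ
          have h1 := hf θ
          have h2' := hf (θ + Real.pi)
          rw [Real.cos_add_pi, Real.sin_add_pi] at h2'
          have hsum := aux_lam_sum_high hk1 hkn h2 A θ
          have hp : v 0 * (lamTheta A k θ + lamTheta A k (θ + Real.pi)) ≤ 0 :=
            mul_nonpos_of_nonneg_of_nonpos hv0 hsum
          nlinarith
        have hv0' : v = 0 := by
          by_contra hne
          exact hplane ⟨v, hne, hzero⟩
        rw [Set.mem_singleton_iff, hv0']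
        funext i
        fin_cases i <;> rfl
      · intro hv
        rw [Set.mem_singleton_iff] at hv
        subst hv
        refine ⟨by norm_num, fun θ => ?_⟩
        simp
    refine ⟨?_, hChat, ?_⟩
    · ext w
      simp only [Set.mem_univ, iff_true]
      intro v hv
      rw [hChat, Set.mem_singleton_iff] at hv
      subst hv
      rw [Fin.sum_univ_three]
      simp
    · rw [Set.eq_empty_iff_forall_notMem]
      intro z hz
      have hmem : ![1, z.re, z.im] ∈ ChatSet A k := by
        refine ⟨by norm_num, fun θ => ?_⟩
        simpa using hz θ
      rw [hChat, Set.mem_singleton_iff] at hmem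
      have := congrFun hmem 0
      norm_num at this

end
end

section
/- Let 1 ≤ k ≤ n, A ∈ ℂ^{n×n}, and let f ∈ ℝ[t,x,y] be a polynomial such that f(λ_k(x,y), −x, −y) = 0 for all (x,y) ∈ ℝ². Let (x*,y*) ∈ ℝ² and set p = (λ_k(x*,y*), −x*, −y*). If (∂f/∂t)(p) ≠ 0, then the function (x,y) ↦ λ_k(x,y) is differentiable at (x*,y*) with partial derivatives ∂λ_k/∂x (x*,y*) = (∂f/∂x)(p) / (∂f/∂t)(p) and ∂λ_k/∂y (x*,y*) = (∂f/∂y)(p) / (∂f/∂t)(p). -/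
open Matrix

noncomputable section

section SpecAux
open Finset
variable {n : ℕ} {M M' : Matrix (Fin n) (Fin n) ℂ}
local notation "⟪" x ", " y "⟫" => @inner ℂ (EuclideanSpace ℂ (Fin n)) _ x y


lemma herm_ReM (A : Matrix (Fin n) (Fin n) ℂ) : ((2⁻¹ : ℂ) • (A + Aᴴ)).IsHermitian := by
  unfold Matrix.IsHermitian
  rw [conjTranspose_smul]
  simp [add_comm]

lemma herm_ImM (A : Matrix (Fin n) (Fin n) ℂ) : (((2 * Complex.I)⁻¹ : ℂ) • (A - Aᴴ)).IsHermitian := by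
  unfold Matrix.IsHermitian
  rw [conjTranspose_smul, conjTranspose_sub, conjTranspose_conjTranspose]
  rw [show star ((2 * Complex.I)⁻¹ : ℂ) = -(2 * Complex.I)⁻¹ by simp [Complex.ext_iff]]
  module

lemma herm_smul_real {M : Matrix (Fin n) (Fin n) ℂ} (h : M.IsHermitian) (x : ℝ) :
    ((x : ℂ) • M).IsHermitian := by
  unfold Matrix.IsHermitian at *
  rw [conjTranspose_smul, h, Complex.star_def, Complex.conj_ofReal]

lemma herm_H (A : Matrix (Fin n) (Fin n) ℂ) (x y : ℝ) :
    ((x : ℂ) • ((2⁻¹ : ℂ) • (A + Aᴴ)) + (y : ℂ) • (((2 * Complex.I)⁻¹ : ℂ) • (A - Aᴴ))).IsHermitian :=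
  Matrix.IsHermitian.add (herm_smul_real (herm_ReM A) x) (herm_smul_real (herm_ImM A) y)

lemma norm_sq_repr (b : OrthonormalBasis (Fin n) ℂ (EuclideanSpace ℂ (Fin n)))
    (x : EuclideanSpace ℂ (Fin n)) : ‖x‖ ^ 2 = ∑ i, ‖b.repr x i‖ ^ 2 := by
  rw [← b.repr.norm_map x, EuclideanSpace.norm_eq, Real.sq_sqrt (by positivity)]

lemma quad_expand (hM : M.IsHermitian) (x : EuclideanSpace ℂ (Fin n)) :
    Complex.re ⟪x, (WithLp.toLp 2 (M *ᵥ x) : EuclideanSpace ℂ (Fin n))⟫ =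
      ∑ i, hM.eigenvalues i * ‖hM.eigenvectorBasis.repr x i‖ ^ 2 := by
  set b := hM.eigenvectorBasis
  have hx : (WithLp.toLp 2 (M *ᵥ x) : EuclideanSpace ℂ (Fin n)) =
      ∑ i, (b.repr x i * (hM.eigenvalues i : ℂ)) • b i := by
    conv_lhs => rw [← b.sum_repr x]
    rw [show (M *ᵥ (∑ i, b.repr x i • b i : EuclideanSpace ℂ (Fin n)) : Fin n → ℂ)
        = ∑ i, b.repr x i • (M *ᵥ (b i : Fin n → ℂ)) by
      rw [← Matrix.mulVecLin_apply, WithLp.ofLp_sum, map_sum]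
      exact Finset.sum_congr rfl fun i _ => by rw [WithLp.ofLp_smul, _root_.map_smul, Matrix.mulVecLin_apply]]
    rw [WithLp.toLp_sum]
    refine Finset.sum_congr rfl fun i _ => ?_
    rw [show (M *ᵥ (b i : Fin n → ℂ)) = hM.eigenvalues i • (b i : Fin n → ℂ) from
      hM.mulVec_eigenvectorBasis i]
    rw [RCLike.real_smul_eq_coe_smul (K := ℂ), smul_comm, smul_smul, mul_comm]
    rfl
  rw [hx, inner_sum, Complex.re_sum]
  refine Finset.sum_congr rfl fun i _ => ?_
  rw [inner_smul_right, show ⟪x, (b i : EuclideanSpace ℂ (Fin n))⟫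
      = starRingEnd ℂ (b.repr x i) by rw [b.repr_apply_apply, inner_conj_symm],
    mul_comm (b.repr x i), mul_assoc, Complex.mul_conj']
  rw [← Complex.ofReal_pow, ← Complex.ofReal_mul, Complex.ofReal_re]

def cbound (E : Matrix (Fin n) (Fin n) ℂ) : ℝ := ∑ i, ∑ l, ‖E i l‖

lemma cbound_nonneg (E : Matrix (Fin n) (Fin n) ℂ) : 0 ≤ cbound E := by
  unfold cbound; positivity

lemma cbound_neg (E : Matrix (Fin n) (Fin n) ℂ) : cbound (-E) = cbound E := by
  unfold cbound; simp

lemma entry_le_norm (x : EuclideanSpace ℂ (Fin n)) (i : Fin n) : ‖x i‖ ≤ ‖x‖ := by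
  rw [EuclideanSpace.norm_eq]
  calc ‖x i‖ = Real.sqrt (‖x i‖ ^ 2) := (Real.sqrt_sq (norm_nonneg _)).symm
  _ ≤ _ := Real.sqrt_le_sqrt (Finset.single_le_sum (f := fun l => ‖x l‖ ^ 2)
      (fun l _ => by positivity) (Finset.mem_univ i))

lemma quad_bound (E : Matrix (Fin n) (Fin n) ℂ) (x : EuclideanSpace ℂ (Fin n)) :
    |Complex.re ⟪x, (WithLp.toLp 2 (E *ᵥ x) : EuclideanSpace ℂ (Fin n))⟫| ≤ cbound E * ‖x‖ ^ 2 := by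
  have h1 : |Complex.re ⟪x, (WithLp.toLp 2 (E *ᵥ x) : EuclideanSpace ℂ (Fin n))⟫|
      ≤ ‖⟪x, (WithLp.toLp 2 (E *ᵥ x) : EuclideanSpace ℂ (Fin n))⟫‖ := Complex.abs_re_le_norm _
  refine h1.trans ?_
  rw [PiLp.inner_apply]
  refine (norm_sum_le _ _).trans ?_
  rw [cbound, Finset.sum_mul]
  refine Finset.sum_le_sum fun i _ => ?_
  rw [RCLike.inner_apply, norm_mul, RCLike.norm_conj]
  have h2 : ‖(E *ᵥ (x : Fin n → ℂ)) i‖ ≤ ∑ l, ‖E i l‖ * ‖x‖ := by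
    rw [Matrix.mulVec, dotProduct]
    refine (norm_sum_le _ _).trans (Finset.sum_le_sum fun l _ => ?_)
    rw [norm_mul]
    exact mul_le_mul_of_nonneg_left (entry_le_norm x l) (norm_nonneg _)
  rw [mul_comm]
  calc ‖x i‖ * ‖(E *ᵥ (x : Fin n → ℂ)) i‖ ≤ ‖x‖ * ∑ l, ‖E i l‖ * ‖x‖ :=
        mul_le_mul (entry_le_norm x i) h2 (norm_nonneg _) (norm_nonneg _)
  _ = (∑ l, ‖E i l‖) * ‖x‖ ^ 2 := by rw [← Finset.sum_mul]; ring

lemma repr_off (b : OrthonormalBasis (Fin n) ℂ (EuclideanSpace ℂ (Fin n))) (J : Finset (Fin n))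
    {x : EuclideanSpace ℂ (Fin n)}
    (hx : x ∈ Submodule.span ℂ (Set.range fun i : J => b i)) {m : Fin n} (hm : m ∉ J) :
    b.repr x m = 0 := by
  obtain ⟨c, rfl⟩ := (Submodule.mem_span_range_iff_exists_fun ℂ).mp hx
  have hrepr : b.repr (∑ i : J, c i • b ↑i) = ∑ i : J, c i • b.repr (b ↑i) := by
    rw [_root_.map_sum]
    exact Finset.sum_congr rfl fun i _ => by rw [_root_.map_smul]
  rw [hrepr]
  have : (∑ i : J, c i • b.repr (b ↑i)) m = ∑ i : J, (c i • b.repr (b ↑i)) m := by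
    rw [WithLp.ofLp_sum]
    exact Finset.sum_apply m univ _
  rw [this]
  refine Finset.sum_eq_zero fun i _ => ?_
  have hne : (i : Fin n) ≠ m := fun h => hm (h ▸ i.2)
  rw [b.repr_self]
  simp only [PiLp.smul_apply, EuclideanSpace.single_apply, smul_eq_mul]
  rw [if_neg (Ne.symm hne), mul_zero]

lemma finrank_span_basis (b : OrthonormalBasis (Fin n) ℂ (EuclideanSpace ℂ (Fin n)))
    (J : Finset (Fin n)) :
    Module.finrank ℂ (Submodule.span ℂ (Set.range fun i : J => b i)) = J.card := by
  have : (fun i : J => b i) = ⇑b ∘ Subtype.val := rfl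
  rw [this, finrank_span_eq_card
    (b.orthonormal.linearIndependent.comp Subtype.val Subtype.val_injective),
    Fintype.card_coe]
lemma span_quad_lower (hM : M.IsHermitian) (J : Finset (Fin n)) (r : ℝ)
    (hr : ∀ i ∈ J, r ≤ hM.eigenvalues i) {x : EuclideanSpace ℂ (Fin n)}
    (hx : x ∈ Submodule.span ℂ (Set.range fun i : J => hM.eigenvectorBasis i)) :
    r * ‖x‖ ^ 2 ≤ Complex.re ⟪x, (WithLp.toLp 2 (M *ᵥ x) : EuclideanSpace ℂ (Fin n))⟫ := by
  rw [quad_expand hM x, norm_sq_repr hM.eigenvectorBasis x, Finset.mul_sum]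
  refine Finset.sum_le_sum fun i _ => ?_
  by_cases hi : i ∈ J
  · exact mul_le_mul_of_nonneg_right (hr i hi) (by positivity)
  · rw [repr_off hM.eigenvectorBasis J hx hi]
    simp

lemma span_quad_upper (hM : M.IsHermitian) (J : Finset (Fin n)) (r : ℝ)
    (hr : ∀ i ∈ J, hM.eigenvalues i ≤ r) {x : EuclideanSpace ℂ (Fin n)}
    (hx : x ∈ Submodule.span ℂ (Set.range fun i : J => hM.eigenvectorBasis i)) :
    Complex.re ⟪x, (WithLp.toLp 2 (M *ᵥ x) : EuclideanSpace ℂ (Fin n))⟫ ≤ r * ‖x‖ ^ 2 := by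
  rw [quad_expand hM x, norm_sq_repr hM.eigenvectorBasis x, Finset.mul_sum]
  refine Finset.sum_le_sum fun i _ => ?_
  by_cases hi : i ∈ J
  · exact mul_le_mul_of_nonneg_right (hr i hi) (by positivity)
  · rw [repr_off hM.eigenvectorBasis J hx hi]
    simp

/-- `j`-th smallest eigenvalue. -/
def sortedEig (hM : M.IsHermitian) (j : Fin n) : ℝ :=
  hM.eigenvalues (Tuple.sort hM.eigenvalues j)

lemma sorted_comp (hM : M.IsHermitian) (hM' : M'.IsHermitian) (j : Fin n) :
    sortedEig hM j ≤ sortedEig hM' j + cbound (M - M') := by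
  classical
  set σ := Tuple.sort hM.eigenvalues
  set σ' := Tuple.sort hM'.eigenvalues
  set S := Submodule.span ℂ (Set.range fun i : (Finset.Ici j).image σ => hM.eigenvectorBasis i)
  set T := Submodule.span ℂ (Set.range fun i : (Finset.Iic j).image σ' => hM'.eigenvectorBasis i)
  have hS : Module.finrank ℂ S = n - j :=
    (finrank_span_basis _ _).trans (by rw [Finset.card_image_of_injective _ σ.injective, Fin.card_Ici])
  have hT : Module.finrank ℂ T = j + 1 :=
    (finrank_span_basis _ _).trans (by rw [Finset.card_image_of_injective _ σ'.injective, Fin.card_Iic])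
  have hinf : S ⊓ T ≠ ⊥ := by
    intro hbot
    have h1 := Submodule.finrank_sup_add_finrank_inf_eq S T
    have h2 : Module.finrank ℂ ↥(S ⊔ T) ≤ n :=
      le_trans (Submodule.finrank_le _) (by simp [finrank_euclideanSpace])
    rw [hbot, hS, hT] at h1
    have := j.isLt
    simp [finrank_bot] at h1
    omega
  obtain ⟨x, hxST, hx0⟩ := Submodule.exists_mem_ne_zero_of_ne_bot hinf
  have hxS : x ∈ S := hxST.1
  have hxT : x ∈ T := hxST.2
  have hlow : sortedEig hM j * ‖x‖ ^ 2 ≤ Complex.re ⟪x, (WithLp.toLp 2 (M *ᵥ x) : EuclideanSpace ℂ (Fin n))⟫ := by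
    refine span_quad_lower hM _ _ (fun i hi => ?_) hxS
    obtain ⟨i', hi', rfl⟩ := Finset.mem_image.mp hi
    exact Tuple.monotone_sort hM.eigenvalues (Finset.mem_Ici.mp hi')
  have hup : Complex.re ⟪x, (WithLp.toLp 2 (M' *ᵥ x) : EuclideanSpace ℂ (Fin n))⟫ ≤ sortedEig hM' j * ‖x‖ ^ 2 := by
    refine span_quad_upper hM' _ _ (fun i hi => ?_) hxT
    obtain ⟨i', hi', rfl⟩ := Finset.mem_image.mp hi
    exact Tuple.monotone_sort hM'.eigenvalues (Finset.mem_Iic.mp hi')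
  have hdiff : Complex.re ⟪x, (WithLp.toLp 2 (M *ᵥ x) : EuclideanSpace ℂ (Fin n))⟫
      - Complex.re ⟪x, (WithLp.toLp 2 (M' *ᵥ x) : EuclideanSpace ℂ (Fin n))⟫
      = Complex.re ⟪x, (WithLp.toLp 2 ((M - M') *ᵥ x) : EuclideanSpace ℂ (Fin n))⟫ := by
    rw [Matrix.sub_mulVec]
    rw [show (WithLp.toLp 2 (M *ᵥ x - M' *ᵥ x) : EuclideanSpace ℂ (Fin n))
      = (WithLp.toLp 2 (M *ᵥ x) : EuclideanSpace ℂ (Fin n)) - (WithLp.toLp 2 (M' *ᵥ x) : EuclideanSpace ℂ (Fin n)) from rfl]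
    rw [inner_sub_right, Complex.sub_re]
  have hb := quad_bound (M - M') x
  have hxn : 0 < ‖x‖ ^ 2 := by have := norm_pos_iff.mpr hx0; positivity
  have key : sortedEig hM j * ‖x‖ ^ 2 ≤ (sortedEig hM' j + cbound (M - M')) * ‖x‖ ^ 2 := by
    have := abs_le.mp hb
    nlinarith [hlow, hup, hdiff]
  exact le_of_mul_le_mul_right (by linarith [key]) hxn

end SpecAux

section Aux
open Finset

variable {n : ℕ} {M M' : Matrix (Fin n) (Fin n) ℂ}

local notation "⟪" x ", " y "⟫" => @inner ℂ (EuclideanSpace ℂ (Fin n)) _ x y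

lemma sorted_abs_diff (hM : M.IsHermitian) (hM' : M'.IsHermitian) (j : Fin n) :
    |sortedEig hM j - sortedEig hM' j| ≤ cbound (M - M') := by
  rw [abs_sub_le_iff]
  constructor
  · linarith [sorted_comp hM hM' j]
  · have h := sorted_comp hM' hM j
    rw [show M' - M = -(M - M') from (neg_sub _ _).symm, cbound_neg] at h
    linarith

lemma cbound_add_le (B C : Matrix (Fin n) (Fin n) ℂ) : cbound (B + C) ≤ cbound B + cbound C := by
  unfold cbound
  rw [← Finset.sum_add_distrib]
  refine Finset.sum_le_sum fun i _ => ?_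
  rw [← Finset.sum_add_distrib]
  exact Finset.sum_le_sum fun l _ => norm_add_le _ _

lemma cbound_smul_real (r : ℝ) (B : Matrix (Fin n) (Fin n) ℂ) :
    cbound ((r : ℂ) • B) = |r| * cbound B := by
  unfold cbound
  rw [Finset.mul_sum]
  refine Finset.sum_congr rfl fun i _ => ?_
  rw [Finset.mul_sum]
  refine Finset.sum_congr rfl fun l _ => ?_
  rw [Matrix.smul_apply, norm_smul, Complex.norm_real, Real.norm_eq_abs]

lemma hermH (A : Matrix (Fin n) (Fin n) ℂ) (x y : ℝ) :
    ((x : ℂ) • ReM A + (y : ℂ) • ImM A).IsHermitian :=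
  Matrix.IsHermitian.add (herm_smul_real (herm_ReM A) x) (herm_smul_real (herm_ImM A) y)

lemma lamXY_eq {k : ℕ} (hk1 : 1 ≤ k) (hkn : k ≤ n) (A : Matrix (Fin n) (Fin n) ℂ) (x y : ℝ) :
    lamXY A k x y = sortedEig (hermH A x y) ⟨n - k, by omega⟩ := by
  unfold lamXY kthEig
  rw [dif_pos (hermH A x y), dif_pos (show n - k < n by omega)]
  rfl

lemma lam_lip {k : ℕ} (hk1 : 1 ≤ k) (hkn : k ≤ n) (A : Matrix (Fin n) (Fin n) ℂ) :
    ∃ K : ℝ, 0 ≤ K ∧ ∀ w w' : ℝ × ℝ,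
      |lamXY A k w.1 w.2 - lamXY A k w'.1 w'.2| ≤ K * ‖w - w'‖ := by
  refine ⟨cbound (ReM A) + cbound (ImM A),
    add_nonneg (cbound_nonneg _) (cbound_nonneg _), fun w w' => ?_⟩
  rw [lamXY_eq hk1 hkn A w.1 w.2, lamXY_eq hk1 hkn A w'.1 w'.2]
  refine (sorted_abs_diff _ _ _).trans ?_
  have hsplit : ((w.1 : ℂ) • ReM A + (w.2 : ℂ) • ImM A) - ((w'.1 : ℂ) • ReM A + (w'.2 : ℂ) • ImM A)
      = ((w.1 - w'.1 : ℝ) : ℂ) • ReM A + ((w.2 - w'.2 : ℝ) : ℂ) • ImM A := by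
    push_cast
    module
  rw [hsplit]
  refine (cbound_add_le _ _).trans ?_
  rw [cbound_smul_real, cbound_smul_real]
  have h1 : |w.1 - w'.1| ≤ ‖w - w'‖ := by
    rw [← Real.norm_eq_abs, ← Prod.fst_sub]
    exact norm_fst_le _
  have h2 : |w.2 - w'.2| ≤ ‖w - w'‖ := by
    rw [← Real.norm_eq_abs, ← Prod.snd_sub]
    exact norm_snd_le _
  nlinarith [cbound_nonneg (ReM A), cbound_nonneg (ImM A), abs_nonneg (w.1 - w'.1),
    abs_nonneg (w.2 - w'.2)]

end Aux

section MvAux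
open MvPolynomial

lemma mv_hasFDerivAt {m : ℕ} (f : MvPolynomial (Fin m) ℝ) (v₀ : Fin m → ℝ) :
    HasFDerivAt (fun v : Fin m → ℝ => eval v f)
      (∑ i, eval v₀ (pderiv i f) • ContinuousLinearMap.proj (R := ℝ) (φ := fun _ : Fin m => ℝ) i)
      v₀ := by
  induction f using MvPolynomial.induction_on with
  | C a =>
    simp only [eval_C, pderiv_C, map_zero, zero_smul, Finset.sum_const_zero]
    exact hasFDerivAt_const a v₀
  | add p q hp hq =>
    have : HasFDerivAt (fun v : Fin m → ℝ => eval v p + eval v q) _ v₀ := hp.add hq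
    simp only [eval_add]
    refine this.congr_fderiv (Eq.symm ?_)
    rw [← Finset.sum_add_distrib]
    refine Finset.sum_congr rfl fun i _ => ?_
    rw [map_add, map_add, add_smul]
  | mul_X p i hp =>
    have hX : HasFDerivAt (fun v : Fin m → ℝ => v i)
        (ContinuousLinearMap.proj (R := ℝ) (φ := fun _ : Fin m => ℝ) i) v₀ :=
      ((ContinuousLinearMap.proj (R := ℝ) (φ := fun _ : Fin m => ℝ) i).hasFDerivAt (x := v₀)).congr_of_eventuallyEq (Filter.Eventually.of_forall fun v => rfl)
    have hmul : HasFDerivAt (fun v : Fin m → ℝ => eval v p * v i) _ v₀ := hp.mul hX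
    have heq : (fun v : Fin m → ℝ => eval v (p * X i)) = fun v => eval v p * v i := by
      funext v; rw [_root_.map_mul, eval_X]
    rw [heq]
    refine hmul.congr_fderiv (Eq.symm ?_)
    ext v
    simp only [ContinuousLinearMap.sum_apply, ContinuousLinearMap.smul_apply,
      ContinuousLinearMap.proj_apply, ContinuousLinearMap.add_apply, smul_eq_mul]
    have hterm : ∀ j, eval v₀ (pderiv j (p * X i)) * v j
        = eval v₀ (pderiv j p) * v₀ i * v j + (if i = j then eval v₀ p * v j else 0) := by
      intro j
      rw [pderiv_mul, pderiv_X, _root_.map_add, _root_.map_mul, eval_X, _root_.map_mul]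
      by_cases h : i = j <;> simp [h, Pi.single_apply] <;> ring
    rw [Finset.sum_congr rfl (fun j _ => hterm j), Finset.sum_add_distrib,
      Finset.sum_ite_eq _ i (fun j => eval v₀ p * v j)]
    simp only [Finset.mem_univ, if_true]
    rw [show (∑ j, eval v₀ (pderiv j p) * v₀ i * v j) = v₀ i * ∑ j, eval v₀ (pderiv j p) * v j by
      rw [Finset.mul_sum]; exact Finset.sum_congr rfl fun j _ => by ring]
    ring

end MvAux

set_option maxHeartbeats 1600000 in
open MvPolynomial in
/-- If `f ∈ ℝ[t,x,y]` vanishes along `(λ_k(x,y), -x, -y)` and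
`∂f/∂t` is nonzero at `p = (λ_k(x*,y*), -x*, -y*)`, then `(x,y) ↦ λ_k(x,y)` is
differentiable at `(x*,y*)` with the stated partial derivatives. -/
theorem stmt6 {n k : ℕ} (hk1 : 1 ≤ k) (hkn : k ≤ n)
    (A : Matrix (Fin n) (Fin n) ℂ)
    (f : MvPolynomial (Fin 3) ℝ)
    (hf : ∀ x y : ℝ, eval ![lamXY A k x y, -x, -y] f = 0)
    (x₀ y₀ : ℝ)
    (hden : eval ![lamXY A k x₀ y₀, -x₀, -y₀] (pderiv (0 : Fin 3) f) ≠ 0) :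
    ∃ L : ℝ × ℝ →L[ℝ] ℝ,
      HasFDerivAt (fun p : ℝ × ℝ => lamXY A k p.1 p.2) L (x₀, y₀) ∧
      L (1, 0) = eval ![lamXY A k x₀ y₀, -x₀, -y₀] (pderiv (1 : Fin 3) f) /
        eval ![lamXY A k x₀ y₀, -x₀, -y₀] (pderiv (0 : Fin 3) f) ∧
      L (0, 1) = eval ![lamXY A k x₀ y₀, -x₀, -y₀] (pderiv (2 : Fin 3) f) /
        eval ![lamXY A k x₀ y₀, -x₀, -y₀] (pderiv (0 : Fin 3) f) := by
  classical
  set lam : ℝ × ℝ → ℝ := fun w => lamXY A k w.1 w.2 with hlam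
  set w₀ : ℝ × ℝ := (x₀, y₀) with hw₀
  set p : Fin 3 → ℝ := ![lamXY A k x₀ y₀, -x₀, -y₀] with hp
  set ct := eval p (pderiv (0 : Fin 3) f) with hct
  set cx := eval p (pderiv (1 : Fin 3) f) with hcx
  set cy := eval p (pderiv (2 : Fin 3) f) with hcy
  set L : ℝ × ℝ →L[ℝ] ℝ := (cx / ct) • ContinuousLinearMap.fst ℝ ℝ ℝ
      + (cy / ct) • ContinuousLinearMap.snd ℝ ℝ ℝ with hL
  refine ⟨L, ?_, ?_, ?_⟩
  · -- the hard part
    obtain ⟨K, hK0, hK⟩ := lam_lip hk1 hkn A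
    set v : ℝ × ℝ → (Fin 3 → ℝ) := fun w => ![lam w, -w.1, -w.2] with hv
    have hv0 : v w₀ = p := rfl
    have hvlip : ∀ w : ℝ × ℝ, ‖v w - v w₀‖ ≤ (K + 1) * ‖w - w₀‖ := by
      intro w
      rw [pi_norm_le_iff_of_nonneg (by positivity)]
      intro i
      fin_cases i
      · show ‖lam w - lam w₀‖ ≤ _
        rw [Real.norm_eq_abs]
        calc |lam w - lam w₀| ≤ K * ‖w - w₀‖ := hK w w₀
        _ ≤ (K + 1) * ‖w - w₀‖ := by nlinarith [norm_nonneg (w - w₀)]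
      · show ‖-w.1 - -w₀.1‖ ≤ _
        have h' : -w.1 - -w₀.1 = -(w - w₀).1 := by rw [Prod.fst_sub]; ring
        rw [h', norm_neg]
        calc ‖(w - w₀).1‖ ≤ ‖w - w₀‖ := norm_fst_le _
        _ ≤ (K + 1) * ‖w - w₀‖ := by nlinarith [norm_nonneg (w - w₀)]
      · show ‖-w.2 - -w₀.2‖ ≤ _
        have h' : -w.2 - -w₀.2 = -(w - w₀).2 := by rw [Prod.snd_sub]; ring
        rw [h', norm_neg]
        calc ‖(w - w₀).2‖ ≤ ‖w - w₀‖ := norm_snd_le _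
        _ ≤ (K + 1) * ‖w - w₀‖ := by nlinarith [norm_nonneg (w - w₀)]
    have htend : Filter.Tendsto v (nhds w₀) (nhds p) := by
      rw [← hv0, tendsto_iff_norm_sub_tendsto_zero]
      refine squeeze_zero (fun w => norm_nonneg _) hvlip ?_
      have h1 : Filter.Tendsto (fun w : ℝ × ℝ => ‖w - w₀‖) (nhds w₀) (nhds 0) := by
        have h2 : Continuous (fun w : ℝ × ℝ => ‖w - w₀‖) :=
          (continuous_id.sub continuous_const).norm
        have h3 := h2.tendsto w₀
        simpa using h3
      simpa using h1.const_mul (K + 1)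
    have hO : (fun w => v w - v w₀) =O[nhds w₀] (fun w => w - w₀) := by
      rw [Asymptotics.isBigO_iff]
      exact ⟨K + 1, Filter.Eventually.of_forall fun w => by
        simpa using hvlip w⟩
    have hD := mv_hasFDerivAt f p
    rw [hasFDerivAt_iff_isLittleO] at hD
    have hcomp := hD.comp_tendsto htend
    have heval : ∀ w : ℝ × ℝ, eval (v w) f = 0 := fun w => hf w.1 w.2
    have hevalp : eval p f = 0 := hf x₀ y₀
    set L' : (Fin 3 → ℝ) →L[ℝ] ℝ :=
      ∑ i, eval p (pderiv i f) • ContinuousLinearMap.proj (R := ℝ) (φ := fun _ : Fin 3 => ℝ) i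
      with hL'
    have hE : (fun w => L' (v w - p)) =o[nhds w₀] (fun w => w - w₀) := by
      have h1 := hcomp
      have heq2 : ((fun u => eval u f - eval p f - L' (u - p)) ∘ v)
          = fun w => -(L' (v w - p)) := by
        funext w
        show eval (v w) f - eval p f - L' (v w - p) = -(L' (v w - p))
        rw [heval w, hevalp]
        ring
      have heq3 : ((fun u : Fin 3 → ℝ => u - p) ∘ v) = fun w => v w - p := rfl
      rw [heq2, heq3] at h1
      rw [hv0] at hO
      have h2 := h1.trans_isBigO hO
      simpa using h2.neg_left
    have hL'app : ∀ w : ℝ × ℝ, L' (v w - p)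
        = ct * (lam w - lam w₀) - cx * (w.1 - x₀) - cy * (w.2 - y₀) := by
      intro w
      rw [hL']
      rw [ContinuousLinearMap.sum_apply]
      rw [Fin.sum_univ_three]
      simp only [ContinuousLinearMap.smul_apply, ContinuousLinearMap.proj_apply, smul_eq_mul]
      have e0 : (v w - p) 0 = lam w - lam w₀ := rfl
      have e1 : (v w - p) 1 = -w.1 - -x₀ := rfl
      have e2 : (v w - p) 2 = -w.2 - -y₀ := rfl
      rw [e0, e1, e2]
      ring
    rw [hasFDerivAt_iff_isLittleO]
    have hfun : (fun w : ℝ × ℝ => lam w - lam w₀ - L (w - w₀))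
        = fun w => ct⁻¹ * (L' (v w - p)) := by
      funext w
      rw [hL'app w, hL]
      simp only [ContinuousLinearMap.add_apply, ContinuousLinearMap.smul_apply,
        ContinuousLinearMap.coe_fst', ContinuousLinearMap.coe_snd', smul_eq_mul,
        Prod.fst_sub, Prod.snd_sub]
      field_simp
      ring
    show (fun w : ℝ × ℝ => lam w - lam w₀ - L (w - w₀)) =o[nhds w₀] fun w => w - w₀
    rw [hfun]
    exact hE.const_mul_left ct⁻¹
  · rw [hL]
    simp only [ContinuousLinearMap.add_apply, ContinuousLinearMap.smul_apply,
      ContinuousLinearMap.coe_fst', ContinuousLinearMap.coe_snd', smul_eq_mul]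
    norm_num
  · rw [hL]
    simp only [ContinuousLinearMap.add_apply, ContinuousLinearMap.smul_apply,
      ContinuousLinearMap.coe_fst', ContinuousLinearMap.coe_snd', smul_eq_mul]
    norm_num


end
end

section
/- Let 1 ≤ k ≤ n with k ≤ (n+1)/2, and let A ∈ ℂ^{n×n}. Suppose O_k(A) is not contained in any plane through the origin. If F is a face of conv(O_k(A)) with dim F = 1 and (0,0,0) lies in the relative interior of F, then there exists θ ∈ ℝ with λ_k(θ + π) = −λ_k(θ) such that F is the line segment joining the antipodal points p = (λ_k(θ), −cos θ, −sin θ) and −p of O_k(A). -/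
open Matrix

noncomputable section

lemma extreme_absorb {E : Type*} [AddCommGroup E] [Module ℝ E]
    {s F : Set E} (h : IsExtreme ℝ (convexHull ℝ s) F) {x : E} (hx : x ∈ F) :
    x ∈ convexHull ℝ (s ∩ F) := by
  classical
  have hxC : x ∈ convexHull ℝ s := h.1 hx
  rw [convexHull_eq] at hxC
  obtain ⟨ι, t, w, z, hw0, hw1, hz, hxc⟩ := hxC
  have hsum : ∑ i ∈ t, w i • z i = x := by
    rwa [Finset.centerMass, hw1, inv_one, one_smul] at hxc
  have claim : ∀ i ∈ t, 0 < w i → z i ∈ F := by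
    intro i hi hwi
    have herase : w i + ∑ j ∈ t.erase i, w j = 1 := by
      rw [Finset.add_sum_erase t w hi, hw1]
    have hle : w i ≤ 1 := by
      have : 0 ≤ ∑ j ∈ t.erase i, w j :=
        Finset.sum_nonneg fun j hj => hw0 j (Finset.mem_of_mem_erase hj)
      linarith
    rcases lt_or_eq_of_le hle with hlt | heq
    · -- w i < 1
      have hS : ∑ j ∈ t.erase i, w j = 1 - w i := by linarith
      have hSpos : 0 < ∑ j ∈ t.erase i, w j := by rw [hS]; linarith
      set y := (t.erase i).centerMass w z with hy
      have hyC : y ∈ convexHull ℝ s :=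
        Finset.centerMass_mem_convexHull _
          (fun j hj => hw0 j (Finset.mem_of_mem_erase hj)) hSpos
          (fun j hj => hz j (Finset.mem_of_mem_erase hj))
      have hxseg : w i • z i + (1 - w i) • y = x := by
        rw [hy, Finset.centerMass, hS, smul_smul, mul_inv_cancel₀ (by linarith), one_smul,
          ← hsum]
        exact Finset.add_sum_erase t (fun j => w j • z j) hi
      have hop : x ∈ openSegment ℝ (z i) y :=
        ⟨w i, 1 - w i, hwi, by linarith, by ring, hxseg⟩
      exact h.2 (subset_convexHull ℝ s (hz i hi)) hyC hx hop
    · -- w i = 1 : x = z i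
      have herase0 : ∑ j ∈ t.erase i, w j = 0 := by linarith
      have hz0 : ∀ j ∈ t.erase i, w j • z j = 0 := by
        intro j hj
        have : w j = 0 :=
          (Finset.sum_eq_zero_iff_of_nonneg
            (fun j hj => hw0 j (Finset.mem_of_mem_erase hj))).1 herase0 j hj
        simp [this]
      have : x = z i := by
        rw [← hsum, ← Finset.add_sum_erase t (fun j => w j • z j) hi,
          Finset.sum_eq_zero hz0, add_zero, heq, one_smul]
      rwa [← this]
  -- now restrict to positive weights
  set t' := t.filter (fun i => 0 < w i) with ht'
  have hw1' : ∑ i ∈ t', w i = 1 := by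
    rw [ht', Finset.sum_filter_of_ne (fun i hi hne => (hw0 i hi).lt_of_ne (Ne.symm hne)), hw1]
  have hsum' : ∑ i ∈ t', w i • z i = x := by
    rw [ht', Finset.sum_filter_of_ne, hsum]
    intro i hi hne
    rcases (hw0 i hi).lt_or_eq with h' | h'
    · exact h'
    · exact absurd (by rw [← h', zero_smul]) hne
  have hcm : t'.centerMass w z = x := by
    rw [Finset.centerMass, hw1', inv_one, one_smul, hsum']
  rw [← hcm]
  refine Finset.centerMass_mem_convexHull _
    (fun i hi => hw0 i (Finset.mem_of_mem_filter i hi))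
    (by rw [hw1']; norm_num) (fun i hi => ⟨hz i (Finset.mem_of_mem_filter i hi),
      claim i (Finset.mem_of_mem_filter i hi) ((Finset.mem_filter.1 hi).2)⟩)


lemma ok_coord {n k : ℕ} {A : Matrix (Fin n) (Fin n) ℂ} {x : Fin 3 → ℝ}
    (hx : x ∈ OkSet A k) : (x 1)^2 + (x 2)^2 = 1 := by
  obtain ⟨θ, rfl⟩ := hx
  simp only [Matrix.cons_val_one, Matrix.head_cons, Matrix.cons_val_zero]
  have h2 : (![lamTheta A k θ, -Real.cos θ, -Real.sin θ] : Fin 3 → ℝ) 2 = -Real.sin θ := rfl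
  rw [h2]
  have := Real.sin_sq_add_cos_sq θ
  ring_nf
  linarith [Real.sin_sq_add_cos_sq θ]

/-- Suppose `k ≤ (n+1)/2` and `O_k(A)` is not contained in a plane
through the origin. If `F` is a one-dimensional face of `conv(O_k(A))` containing
`(0,0,0)` in its relative interior, then `F` is the segment joining a pair of antipodal
points `±(λ_k(θ), -cos θ, -sin θ)` of `O_k(A)`, where `λ_k(θ+π) = -λ_k(θ)`. -/
theorem stmt9 {n k : ℕ} (hk1 : 1 ≤ k) (hkn : k ≤ n) (hk2 : (k : ℝ) ≤ (n + 1) / 2)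
    (A : Matrix (Fin n) (Fin n) ℂ)
    (hplane : ¬ ∃ w : Fin 3 → ℝ, w ≠ 0 ∧
      ∀ θ : ℝ, w 0 * lamTheta A k θ - w 1 * Real.cos θ - w 2 * Real.sin θ = 0)
    (F : Set (Fin 3 → ℝ)) (hFconv : Convex ℝ F)
    (hface : IsExtreme ℝ (convexHull ℝ (OkSet A k)) F)
    (hdim : Module.finrank ℝ (affineSpan ℝ F).direction = 1)
    (h0 : (0 : Fin 3 → ℝ) ∈ intrinsicInterior ℝ F) :
    ∃ θ : ℝ, lamTheta A k (θ + Real.pi) = -lamTheta A k θ ∧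
      F = segment ℝ ![lamTheta A k θ, -Real.cos θ, -Real.sin θ]
            (-![lamTheta A k θ, -Real.cos θ, -Real.sin θ]) := by
  classical
  have h0F : (0 : Fin 3 → ℝ) ∈ F := intrinsicInterior_subset h0
  have hFeq : F = convexHull ℝ (OkSet A k ∩ F) :=
    Set.Subset.antisymm (fun x hx => extreme_absorb hface hx)
      (convexHull_min Set.inter_subset_right hFconv)
  obtain ⟨d, hd0, hdall⟩ := finrank_eq_one_iff'.1 hdim
  set v : Fin 3 → ℝ := (d : Fin 3 → ℝ) with hv
  have hmemD : ∀ x ∈ F, ∃ c : ℝ, x = c • v := by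
    intro x hxF
    have hxD : x ∈ (affineSpan ℝ F).direction := by
      have := AffineSubspace.vsub_mem_direction (subset_affineSpan ℝ F hxF)
        (subset_affineSpan ℝ F h0F)
      simpa using this
    obtain ⟨c, hc⟩ := hdall ⟨x, hxD⟩
    exact ⟨c, by simpa using (congrArg Subtype.val hc).symm⟩
  have hOF_ne : (OkSet A k ∩ F).Nonempty := by
    rcases Set.eq_empty_or_nonempty (OkSet A k ∩ F) with h | h
    · rw [h, convexHull_empty] at hFeq
      exact absurd (hFeq ▸ h0F) (Set.notMem_empty 0)
    · exact h
  obtain ⟨x0, hx0O, hx0F⟩ := hOF_ne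
  obtain ⟨c0, hc0⟩ := hmemD x0 hx0F
  have hx0n : (x0 1)^2 + (x0 2)^2 = 1 := ok_coord hx0O
  set r : ℝ := (v 1)^2 + (v 2)^2 with hr
  have hcr0 : c0^2 * r = 1 := by
    have e1 : x0 1 = c0 * v 1 := by rw [hc0]; rfl
    have e2 : x0 2 = c0 * v 2 := by rw [hc0]; rfl
    rw [e1, e2] at hx0n
    rw [hr]; ring_nf; ring_nf at hx0n; linarith
  have hrpos : 0 < r := by nlinarith [sq_nonneg c0, sq_nonneg r]
  set t : ℝ := (Real.sqrt r)⁻¹ with htdef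
  set u : Fin 3 → ℝ := t • v with hu
  have key : ∀ x ∈ OkSet A k ∩ F, x = u ∨ x = -u := by
    rintro x ⟨hxO, hxF⟩
    obtain ⟨c, hc⟩ := hmemD x hxF
    have hxn : (x 1)^2 + (x 2)^2 = 1 := ok_coord hxO
    have hcr : c^2 * r = 1 := by
      have e1 : x 1 = c * v 1 := by rw [hc]; rfl
      have e2 : x 2 = c * v 2 := by rw [hc]; rfl
      rw [e1, e2] at hxn
      rw [hr]; ring_nf; ring_nf at hxn; linarith
    have hs : t^2 = r⁻¹ := by rw [htdef, inv_pow, Real.sq_sqrt hrpos.le]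
    have hinv : r * r⁻¹ = 1 := mul_inv_cancel₀ hrpos.ne'
    have h2 : (c - t) * (c + t) = 0 := by
      linear_combination r⁻¹ * hcr - hs - c^2 * hinv
    rcases mul_eq_zero.1 h2 with h' | h'
    · left
      rw [hc, hu, sub_eq_zero.1 h']
    · right
      rw [hc, hu, ← neg_smul, ← (by linarith : c = -t)]
  have hboth : ∀ w : Fin 3 → ℝ, ¬ (OkSet A k ∩ F ⊆ {w}) := by
    intro w hsub'
    have hFw : F ⊆ {w} := by
      rw [hFeq]; exact convexHull_min hsub' (convex_singleton w)
    have hw0 : w = 0 := (hFw h0F).symm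
    have hx0w : x0 = w := hsub' ⟨hx0O, hx0F⟩
    rw [hx0w, hw0] at hx0n
    norm_num at hx0n
  have huF : u ∈ OkSet A k ∩ F := by
    by_contra hun
    refine hboth (-u) (fun x hx => ?_)
    rcases key x hx with h | h
    · exact absurd (h ▸ hx) hun
    · exact h
  have hnuF : -u ∈ OkSet A k ∩ F := by
    by_contra hun
    refine hboth u (fun x hx => ?_)
    rcases key x hx with h | h
    · exact h
    · exact absurd (h ▸ hx) hun
  have hFseg : F = segment ℝ u (-u) := by
    apply Set.Subset.antisymm
    · rw [hFeq, ← convexHull_pair]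
      exact convexHull_mono (fun x hx => by rcases key x hx with h | h <;> simp [h])
    · exact hFconv.segment_subset huF.2 hnuF.2
  obtain ⟨θ1, hθ1⟩ := huF.1
  obtain ⟨θ2, hθ2⟩ := hnuF.1
  have e0 : u 0 = lamTheta A k θ1 := by rw [hθ1]; rfl
  have e1 : u 1 = -Real.cos θ1 := by rw [hθ1]; rfl
  have e2 : u 2 = -Real.sin θ1 := by rw [hθ1]; rfl
  have f0 : -(u 0) = lamTheta A k θ2 := by
    have := congrFun hθ2 0; simpa using this
  have f1 : -(u 1) = -Real.cos θ2 := by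
    have := congrFun hθ2 1; simpa using this
  have f2 : -(u 2) = -Real.sin θ2 := by
    have := congrFun hθ2 2; simpa using this
  have hcos : Real.cos θ2 = -Real.cos θ1 := by linarith [f1, e1]
  have hsin : Real.sin θ2 = -Real.sin θ1 := by linarith [f2, e2]
  refine ⟨θ1, ?_, ?_⟩
  · have hstep : lamTheta A k (θ1 + Real.pi) = lamTheta A k θ2 := by
      unfold lamTheta
      rw [Real.cos_add_pi, Real.sin_add_pi, ← hcos, ← hsin]
    rw [hstep, ← f0, e0]
  · rw [hFseg, ← hθ1]


end
end
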